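/- Fix ħ ∈ ℂ. For α ∈ ℂ \ {0} and γ ∈ ℂ, define the N×N complex matrix T(α, γ) = α^H · exp(ħ γ X₊), where exp is the matrix exponential. Then for all nonzero α₁, α₂ ∈ ℂ and all γ₁, γ₂ ∈ ℂ: T(α₂, γ₂) · T(α₁, γ₁) = T(α₂α₁, α₁^{−2}γ₂ + γ₁). (This is the cocycle condition for the transition functions of the deformed bundle E_ħ.) -/

import Mathlib

open Matrix

/-- The matrix `X₊` with `(X₊)_{i,i+1} = √(i (N - i))` (1-indexed) and all other entries `0`. -/
noncomputable def Xplus (N : ℕ) : Matrix (Fin N) (Fin N) ℂ :=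
  fun i j => if (j : ℕ) = (i : ℕ) + 1
    then (Real.sqrt (((i : ℕ) + 1) * (N - 1 - (i : ℕ))) : ℂ) else 0

/-- The diagonal matrix `α^H` with entries `(α^H)_{ii} = α^(N+1-2i)` (1-indexed). -/
noncomputable def alphaH (N : ℕ) (α : ℂ) : Matrix (Fin N) (Fin N) ℂ :=
  Matrix.diagonal fun i => α ^ ((N : ℤ) - 1 - 2 * (i : ℕ))

/-- The transition matrix `T(α, γ) = α^H · exp(hbar γ X₊)`. -/
noncomputable def Tmat (N : ℕ) (hbar : ℂ) (α γ : ℂ) : Matrix (Fin N) (Fin N) ℂ :=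
  alphaH N α * NormedSpace.exp ((hbar * γ) • Xplus N)

lemma alphaH_mul (N : ℕ) (α β : ℂ) :
    alphaH N α * alphaH N β = alphaH N (α * β) := by
  simp [alphaH, diagonal_mul_diagonal, mul_zpow]

lemma alphaH_one (N : ℕ) : alphaH N 1 = 1 := by
  simp [alphaH]

lemma alphaH_mul_Xplus (N : ℕ) (α : ℂ) (hα : α ≠ 0) :
    alphaH N α * Xplus N = (α ^ (2 : ℤ)) • (Xplus N * alphaH N α) := by
  ext i j
  rw [Matrix.smul_apply, alphaH, Matrix.diagonal_mul, Matrix.mul_diagonal]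
  by_cases h : (j : ℕ) = (i : ℕ) + 1
  · have he : ((N : ℤ) - 1 - 2 * (i : ℕ)) = 2 + ((N : ℤ) - 1 - 2 * (j : ℕ)) := by
      rw [h]; push_cast; ring
    rw [he, zpow_add₀ hα, smul_eq_mul]
    ring
  · simp [Xplus, h]

/-- `α^H` as a unit, with inverse `(α⁻¹)^H`. -/
noncomputable def alphaHU (N : ℕ) (α : ℂ) (hα : α ≠ 0) : (Matrix (Fin N) (Fin N) ℂ)ˣ :=
  ⟨alphaH N α, alphaH N α⁻¹,
    by rw [alphaH_mul, mul_inv_cancel₀ hα, alphaH_one],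
    by rw [alphaH_mul, inv_mul_cancel₀ hα, alphaH_one]⟩

lemma exp_swap (N : ℕ) (c α : ℂ) (hα : α ≠ 0) :
    NormedSpace.exp (c • Xplus N) * alphaH N α =
      alphaH N α * NormedSpace.exp ((α ^ (-2 : ℤ) * c) • Xplus N) := by
  have hconj : (alphaHU N α hα : Matrix (Fin N) (Fin N) ℂ) *
      ((α ^ (-2 : ℤ) * c) • Xplus N) * ((alphaHU N α hα)⁻¹ : _) = c • Xplus N := by
    show alphaH N α * ((α ^ (-2 : ℤ) * c) • Xplus N) * alphaH N α⁻¹ = c • Xplus N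
    rw [Matrix.mul_smul, alphaH_mul_Xplus N α hα, smul_smul, Matrix.smul_mul,
      Matrix.mul_assoc, alphaH_mul, mul_inv_cancel₀ hα, alphaH_one, Matrix.mul_one]
    congr 1
    rw [mul_right_comm, ← zpow_add₀ hα]
    norm_num
  have := Matrix.exp_units_conj (alphaHU N α hα) ((α ^ (-2 : ℤ) * c) • Xplus N)
  rw [hconj] at this
  rw [this]
  show alphaH N α * _ * alphaH N α⁻¹ * alphaH N α = _
  rw [Matrix.mul_assoc, Matrix.mul_assoc, alphaH_mul, inv_mul_cancel₀ hα, alphaH_one,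
    Matrix.mul_one]

/-- Cocycle condition for the transition functions of the deformed bundle `E_hbar`:
`T(α₂, γ₂) · T(α₁, γ₁) = T(α₂ α₁, α₁⁻² γ₂ + γ₁)`. -/
theorem transition_cocycle (N : ℕ) (hN : 2 ≤ N) (hbar : ℂ)
    (α₁ α₂ : ℂ) (hα₁ : α₁ ≠ 0) (hα₂ : α₂ ≠ 0) (γ₁ γ₂ : ℂ) :
    Tmat N hbar α₂ γ₂ * Tmat N hbar α₁ γ₁ =
      Tmat N hbar (α₂ * α₁) (α₁ ^ (-2 : ℤ) * γ₂ + γ₁) := by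
  unfold Tmat
  calc alphaH N α₂ * NormedSpace.exp ((hbar * γ₂) • Xplus N) *
        (alphaH N α₁ * NormedSpace.exp ((hbar * γ₁) • Xplus N))
      = alphaH N α₂ * (NormedSpace.exp ((hbar * γ₂) • Xplus N) * alphaH N α₁) *
        NormedSpace.exp ((hbar * γ₁) • Xplus N) := by
        simp only [Matrix.mul_assoc]
    _ = alphaH N α₂ * (alphaH N α₁ *
          NormedSpace.exp ((α₁ ^ (-2 : ℤ) * (hbar * γ₂)) • Xplus N)) *
          NormedSpace.exp ((hbar * γ₁) • Xplus N) := by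
        rw [exp_swap N (hbar * γ₂) α₁ hα₁]
    _ = alphaH N (α₂ * α₁) *
          (NormedSpace.exp ((α₁ ^ (-2 : ℤ) * (hbar * γ₂)) • Xplus N) *
           NormedSpace.exp ((hbar * γ₁) • Xplus N)) := by
        rw [← alphaH_mul]
        simp only [Matrix.mul_assoc]
    _ = alphaH N (α₂ * α₁) *
          NormedSpace.exp ((hbar * (α₁ ^ (-2 : ℤ) * γ₂ + γ₁)) • Xplus N) := by
        rw [← Matrix.exp_add_of_commute]
        · congr 1
          rw [← add_smul]
          congr 1
          ring
        · exact (Commute.refl (Xplus N)).smul_left _ |>.smul_right _
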